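/- arXiv:0706.3158 — 4 statements merged into one kernel-verified Lean document; each statement's English description precedes it below -/
import Mathlib

section
/- For every angle θ and real numbers λ₁, λ₂ with λ₁² + λ₂² = 1, the 1-form ω = λ₁ω₁ + λ₂ω₂ on the 3-torus, where ω₁ = cos(nθ₁)dθ₂ + sin(nθ₁)dθ₃ and ω₂ = -sin(nθ₁)dθ₂ + cos(nθ₁)dθ₃ for a positive integer n, satisfies ω ∧ dω = -n dθ₁ ∧ dθ₂ ∧ dθ₃; in particular every such ω is a contact form and all elements of the circle define the same volume form. -/
/-- Points of the 3-torus `(ℝ/2πℤ)³`, represented by their angular coordinates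
`(θ₁, θ₂, θ₃) ∈ ℝ³` (all forms below are `2π`-periodic, so they descend). -/
abbrev T3Pt := Fin 3 → ℝ

/-- Exterior derivative of a 1-form on `ℝ³` (a 1-form being given by its
pointwise value on tangent vectors): `dω_x(u,v) = ∂_u(ω(v)) - ∂_v(ω(u))`. -/
noncomputable def dform (ω : T3Pt → T3Pt → ℝ) (x u v : T3Pt) : ℝ :=
  fderiv ℝ (fun y => ω y v) x u - fderiv ℝ (fun y => ω y u) x v

/-- Wedge of a 1-form with a 2-form on `ℝ³`. -/
def wedge12 (α : T3Pt → T3Pt → ℝ) (B : T3Pt → T3Pt → T3Pt → ℝ)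
    (x u v w : T3Pt) : ℝ :=
  α x u * B x v w - α x v * B x u w + α x w * B x u v

private lemma fderiv_trig (n : ℕ) (a b : ℝ) (x v : T3Pt) :
    fderiv ℝ (fun y : T3Pt => a * Real.cos (n * y 0) + b * Real.sin (n * y 0)) x v
      = (b * Real.cos (n * x 0) - a * Real.sin (n * x 0)) * (n * v 0) := by
  have hlin : HasFDerivAt (fun y : T3Pt => y 0)
      (ContinuousLinearMap.proj (R := ℝ) (φ := fun _ : Fin 3 => ℝ) 0) x :=
    (ContinuousLinearMap.proj (R := ℝ) (φ := fun _ : Fin 3 => ℝ) 0).hasFDerivAt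
  have hmul : HasDerivAt (fun t : ℝ => (n : ℝ) * t) (n : ℝ) (x 0) := by
    simpa using (hasDerivAt_id (x 0)).const_mul (n : ℝ)
  have hcos : HasDerivAt (fun t : ℝ => Real.cos ((n : ℝ) * t))
      (-Real.sin ((n : ℝ) * x 0) * (n : ℝ)) (x 0) :=
    (Real.hasDerivAt_cos ((n : ℝ) * x 0)).comp (x 0) hmul
  have hsin : HasDerivAt (fun t : ℝ => Real.sin ((n : ℝ) * t))
      (Real.cos ((n : ℝ) * x 0) * (n : ℝ)) (x 0) :=
    (Real.hasDerivAt_sin ((n : ℝ) * x 0)).comp (x 0) hmul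
  have h1 : HasFDerivAt (fun y : T3Pt => Real.cos ((n : ℝ) * y 0))
      ((-Real.sin ((n : ℝ) * x 0) * (n : ℝ)) •
        ContinuousLinearMap.proj (R := ℝ) (φ := fun _ : Fin 3 => ℝ) 0) x :=
    by have := hcos.comp_hasFDerivAt x hlin; exact this
  have h2 : HasFDerivAt (fun y : T3Pt => Real.sin ((n : ℝ) * y 0))
      ((Real.cos ((n : ℝ) * x 0) * (n : ℝ)) •
        ContinuousLinearMap.proj (R := ℝ) (φ := fun _ : Fin 3 => ℝ) 0) x :=
    by have := hsin.comp_hasFDerivAt x hlin; exact this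
  have h : HasFDerivAt
      (fun y : T3Pt => a * Real.cos (n * y 0) + b * Real.sin (n * y 0))
      (a • ((-Real.sin ((n : ℝ) * x 0) * (n : ℝ)) •
          ContinuousLinearMap.proj (R := ℝ) (φ := fun _ : Fin 3 => ℝ) 0) +
        b • ((Real.cos ((n : ℝ) * x 0) * (n : ℝ)) •
          ContinuousLinearMap.proj (R := ℝ) (φ := fun _ : Fin 3 => ℝ) 0)) x :=
    (h1.const_smul a).add (h2.const_smul b)
  rw [h.fderiv]
  simp [ContinuousLinearMap.proj_apply, smul_eq_mul]
  ring

/-- for `ω₁ = cos(nθ₁)dθ₂ + sin(nθ₁)dθ₃`,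
`ω₂ = -sin(nθ₁)dθ₂ + cos(nθ₁)dθ₃` on the 3-torus and any `λ₁² + λ₂² = 1`, the
form `ω = λ₁ω₁ + λ₂ω₂` satisfies `ω ∧ dω = -n dθ₁∧dθ₂∧dθ₃` (as 3-forms, i.e.
evaluated on the coordinate frame); in particular `ω ∧ dω` is nowhere zero (so
`ω` is a contact form) and is independent of `(λ₁, λ₂)` (the circle is taut). -/
theorem torus_taut_contact_circle (n : ℕ) (hn : 0 < n) (l₁ l₂ : ℝ)
    (hl : l₁ ^ 2 + l₂ ^ 2 = 1) (ω₁ ω₂ ω : T3Pt → T3Pt → ℝ)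
    (hω₁ : ω₁ = fun x u => Real.cos (n * x 0) * u 1 + Real.sin (n * x 0) * u 2)
    (hω₂ : ω₂ = fun x u => -Real.sin (n * x 0) * u 1 + Real.cos (n * x 0) * u 2)
    (hω : ω = fun x u => l₁ * ω₁ x u + l₂ * ω₂ x u) :
    ∀ x : T3Pt,
      wedge12 ω (dform ω) x (Pi.single 0 1) (Pi.single 1 1) (Pi.single 2 1)
          = -(n : ℝ) ∧
      wedge12 ω (dform ω) x (Pi.single 0 1) (Pi.single 1 1) (Pi.single 2 1)
          ≠ 0 := by
  intro x
  have hωeq : ω = fun y u => (l₁ * u 1 + l₂ * u 2) * Real.cos (n * y 0)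
      + (l₁ * u 2 - l₂ * u 1) * Real.sin (n * y 0) := by
    subst hω hω₁ hω₂; funext y u; ring
  have hder : ∀ u v : T3Pt, fderiv ℝ (fun y => ω y u) x v
      = ((l₁ * u 2 - l₂ * u 1) * Real.cos (n * x 0)
          - (l₁ * u 1 + l₂ * u 2) * Real.sin (n * x 0)) * (n * v 0) := by
    intro u v
    rw [hωeq]
    exact fderiv_trig n _ _ x v
  have e0 : (Pi.single 0 1 : T3Pt) 0 = 1 ∧ (Pi.single 0 1 : T3Pt) 1 = 0 ∧
      (Pi.single 0 1 : T3Pt) 2 = 0 := by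
    refine ⟨?_, ?_, ?_⟩ <;> simp [Pi.single_apply]
  have e1 : (Pi.single 1 1 : T3Pt) 0 = 0 ∧ (Pi.single 1 1 : T3Pt) 1 = 1 ∧
      (Pi.single 1 1 : T3Pt) 2 = 0 := by
    refine ⟨?_, ?_, ?_⟩ <;> simp [Pi.single_apply]
  have e2 : (Pi.single 2 1 : T3Pt) 0 = 0 ∧ (Pi.single 2 1 : T3Pt) 1 = 0 ∧
      (Pi.single 2 1 : T3Pt) 2 = 1 := by
    refine ⟨?_, ?_, ?_⟩ <;> simp [Pi.single_apply]
  have key : wedge12 ω (dform ω) x (Pi.single 0 1) (Pi.single 1 1) (Pi.single 2 1)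
      = -(n : ℝ) := by
    unfold wedge12 dform
    rw [hder, hder, hder, hder, hder, hder]
    rw [hωeq]
    simp only [e0.1, e0.2.1, e0.2.2, e1.1, e1.2.1, e1.2.2, e2.1, e2.2.1, e2.2.2]
    have hpyth := Real.sin_sq_add_cos_sq ((n : ℝ) * x 0)
    linear_combination (-(n:ℝ) * (Real.sin ((n:ℝ) * x 0) ^ 2 + Real.cos ((n:ℝ) * x 0) ^ 2)) * hl
      + (-(n:ℝ)) * hpyth
  refine ⟨key, ?_⟩
  rw [key]
  have : (0 : ℝ) < (n : ℝ) := by exact_mod_cast hn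
  linarith
end

section
/- Let (X₁, X₂, X₃) be an orthonormal frame on an oriented Riemannian 3-manifold satisfying [X₁,X₂] = cX₃, [X₂,X₃] = kX₁, [X₃,X₁] = kX₂ for constants c, k. Then the sectional curvature of the plane spanned by X = cosθ X₁ + sinθ X₂ and Y = -sinφ sinθ X₁ + sinφ cosθ X₂ + cosφ X₃ equals cos²φ · (c²/4) + sin²φ · (ck - 3c²/4); in particular it is independent of θ, and the extremal sectional curvatures are α = c²/4 for planes containing X₃ and β = ck - 3c²/4 for the plane orthogonal to X₃. -/
/-- An abstract model of the calculus on a Riemannian `3`-manifold: `A` plays the role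
of the algebra of smooth functions, `V` the `A`-module of vector fields, equipped with
the action of vector fields on functions, the Lie bracket, a Riemannian metric `g`, its
Levi-Civita connection `nabla` and the oriented cross product `cross`. -/
structure GeomFrame (A V : Type) [CommRing A] [Algebra ℝ A]
    [AddCommGroup V] [Module A V] where
  act : V → A → A
  bracket : V → V → V
  g : V → V → A
  nabla : V → V → V
  cross : V → V → V
  act_add_left : ∀ (X Y : V) (a : A), act (X + Y) a = act X a + act Y a
  act_smul_left : ∀ (f : A) (X : V) (a : A), act (f • X) a = f * act X a
  act_add_right : ∀ (X : V) (a b : A), act X (a + b) = act X a + act X b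
  act_mul : ∀ (X : V) (a b : A), act X (a * b) = a * act X b + b * act X a
  act_const : ∀ (X : V) (r : ℝ), act X (algebraMap ℝ A r) = 0
  g_symm : ∀ v w, g v w = g w v
  g_add_left : ∀ u v w, g (u + v) w = g u w + g v w
  g_smul_left : ∀ (f : A) (v w : V), g (f • v) w = f * g v w
  bracket_antisymm : ∀ v w, bracket v w = - bracket w v
  bracket_add_left : ∀ u v w, bracket (u + v) w = bracket u w + bracket v w
  bracket_smul_left : ∀ (f : A) (v w : V),
    bracket (f • v) w = f • bracket v w - act w f • v
  nabla_add_left : ∀ u v w, nabla (u + v) w = nabla u w + nabla v w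
  nabla_smul_left : ∀ (f : A) (v w : V), nabla (f • v) w = f • nabla v w
  nabla_add_right : ∀ u v w, nabla u (v + w) = nabla u v + nabla u w
  nabla_smul_right : ∀ (f : A) (v w : V),
    nabla v (f • w) = act v f • w + f • nabla v w
  nabla_metric : ∀ X v w, act X (g v w) = g (nabla X v) w + g v (nabla X w)
  nabla_torsion_free : ∀ v w, nabla v w - nabla w v = bracket v w
  cross_antisymm : ∀ v w, cross v w = - cross w v
  cross_add_left : ∀ u v w, cross (u + v) w = cross u w + cross v w
  cross_smul_left : ∀ (f : A) (v w : V), cross (f • v) w = f • cross v w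

/-- `(X₁, X₂, X₃)` is a positively oriented orthonormal (global) frame. -/
structure GeomFrame.IsONFrame {A V : Type} [CommRing A] [Algebra ℝ A]
    [AddCommGroup V] [Module A V] (F : GeomFrame A V) (X₁ X₂ X₃ : V) : Prop where
  g11 : F.g X₁ X₁ = 1
  g22 : F.g X₂ X₂ = 1
  g33 : F.g X₃ X₃ = 1
  g12 : F.g X₁ X₂ = 0
  g13 : F.g X₁ X₃ = 0
  g23 : F.g X₂ X₃ = 0
  span : ∀ v : V, v = F.g v X₁ • X₁ + F.g v X₂ • X₂ + F.g v X₃ • X₃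
  cross12 : F.cross X₁ X₂ = X₃
  cross23 : F.cross X₂ X₃ = X₁
  cross31 : F.cross X₃ X₁ = X₂

/-- The curvature tensor `R(u,v)w = ∇_u∇_v w - ∇_v∇_u w - ∇_{[u,v]} w`. -/
def GeomFrame.curv {A V : Type} [CommRing A] [Algebra ℝ A]
    [AddCommGroup V] [Module A V] (F : GeomFrame A V) (u v w : V) : V :=
  F.nabla u (F.nabla v w) - F.nabla v (F.nabla u w) - F.nabla (F.bracket u v) w

section Aux
variable {A V : Type} [CommRing A] [Algebra ℝ A] [AddCommGroup V] [Module A V]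
  (F : GeomFrame A V)

lemma GF.half (x : A) (r : ℝ) (h : x + x = algebraMap ℝ A r) :
    x = algebraMap ℝ A (r / 2) := by
  have h2 : algebraMap ℝ A (1/2) * (x + x) = x := by
    rw [← two_mul, ← mul_assoc]
    rw [show (2 : A) = algebraMap ℝ A 2 from (map_ofNat _ 2).symm]
    rw [← map_mul]
    norm_num
  rw [h] at h2
  rw [← h2, ← map_mul]
  congr 1
  ring

lemma GF.g_zero_left (w : V) : F.g 0 w = 0 := by
  have := F.g_smul_left 0 0 w
  simpa using this

lemma GF.g_sub_left (u v w : V) : F.g (u - v) w = F.g u w - F.g v w := by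
  have h : F.g ((u - v) + v) w = F.g (u - v) w + F.g v w := F.g_add_left _ _ _
  rw [sub_add_cancel] at h
  linear_combination -h

lemma GF.g_add_right (u v w : V) : F.g u (v + w) = F.g u v + F.g u w := by
  rw [F.g_symm, F.g_add_left, F.g_symm v, F.g_symm w]

lemma GF.g_smul_right (f : A) (u v : V) : F.g u (f • v) = f * F.g u v := by
  rw [F.g_symm, F.g_smul_left, F.g_symm]

lemma GF.g_sub_right (u v w : V) : F.g u (v - w) = F.g u v - F.g u w := by
  rw [F.g_symm, GF.g_sub_left, F.g_symm v, F.g_symm w]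

lemma GF.bracket_self (v : V) : F.bracket v v = 0 := by
  have h := F.bracket_antisymm v v
  have h2 : F.bracket v v + F.bracket v v = 0 := by
    nth_rewrite 2 [h]; abel
  have e : F.bracket v v
      = algebraMap ℝ A (1/2) • (F.bracket v v + F.bracket v v) := by
    rw [← two_smul A, smul_smul,
      show (algebraMap ℝ A (1/2) * 2 : A) = 1 by
        rw [show (2 : A) = algebraMap ℝ A 2 from (map_ofNat _ 2).symm, ← map_mul]
        norm_num,
      one_smul]
  rw [h2, smul_zero] at e
  exact e

lemma GF.bracket_add_right (u v w : V) :
    F.bracket u (v + w) = F.bracket u v + F.bracket u w := by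
  rw [F.bracket_antisymm, F.bracket_add_left, F.bracket_antisymm v u,
    F.bracket_antisymm w u]
  abel

lemma GF.actC (u : V) : F.act u (0 : A) = 0 := by
  have := F.act_const u 0
  simpa using this

lemma GF.actC1 (u : V) : F.act u (1 : A) = 0 := by
  have := F.act_const u 1
  simpa using this

lemma GF.bracketC_left (r : ℝ) (v w : V) :
    F.bracket (algebraMap ℝ A r • v) w = algebraMap ℝ A r • F.bracket v w := by
  rw [F.bracket_smul_left, F.act_const, zero_smul, sub_zero]

lemma GF.bracketC_right (r : ℝ) (v w : V) :
    F.bracket v (algebraMap ℝ A r • w) = algebraMap ℝ A r • F.bracket v w := by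
  rw [F.bracket_antisymm, GF.bracketC_left, F.bracket_antisymm w v, smul_neg, neg_neg]

lemma GF.nablaC_right (r : ℝ) (v w : V) :
    F.nabla v (algebraMap ℝ A r • w) = algebraMap ℝ A r • F.nabla v w := by
  rw [F.nabla_smul_right, F.act_const, zero_smul, zero_add]

lemma GF.nabla_zero_left (w : V) : F.nabla 0 w = 0 := by
  have := F.nabla_smul_left 0 0 w
  simpa using this

lemma GF.koszulS (u v w : V)
    (h1 : F.act u (F.g v w) = 0)
    (h2 : F.act v (F.g u w) = 0)
    (h3 : F.act w (F.g u v) = 0)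
    (b1 b2 b3 : ℝ)
    (hb1 : F.g (F.bracket u v) w = algebraMap ℝ A b1)
    (hb2 : F.g (F.bracket v w) u = algebraMap ℝ A b2)
    (hb3 : F.g (F.bracket w u) v = algebraMap ℝ A b3) :
    F.g (F.nabla u v) w = algebraMap ℝ A ((b1 - b2 + b3) / 2) := by
  have E1 := F.nabla_metric u v w
  have E2 := F.nabla_metric v u w
  have E3 := F.nabla_metric w u v
  rw [h1, F.g_symm v] at E1
  rw [h2, F.g_symm u] at E2
  rw [h3, F.g_symm u] at E3
  have T1 : F.g (F.nabla u v) w - F.g (F.nabla v u) w = F.g (F.bracket u v) w := by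
    rw [← F.nabla_torsion_free, GF.g_sub_left]
  have T2 : F.g (F.nabla v w) u - F.g (F.nabla w v) u = F.g (F.bracket v w) u := by
    rw [← F.nabla_torsion_free, GF.g_sub_left]
  have T3 : F.g (F.nabla w u) v - F.g (F.nabla u w) v = F.g (F.bracket w u) v := by
    rw [← F.nabla_torsion_free, GF.g_sub_left]
  rw [hb1] at T1; rw [hb2] at T2; rw [hb3] at T3
  apply GF.half
  rw [map_add, map_sub]
  linear_combination T1 - T2 + T3 - E1 - E2 + E3

end Aux

/-- the sectional curvature `g(R(X,Y)Y,X)` of the plane spanned by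
`X = cosθ X₁ + sinθ X₂` and `Y = -sinφ sinθ X₁ + sinφ cosθ X₂ + cosφ X₃` equals
`cos²φ (c²/4) + sin²φ (ck - 3c²/4)`; in particular it is independent of `θ`,
the curvature of any plane containing `X₃` (case `φ = 0`) is `c²/4` and the
curvature of the plane orthogonal to `X₃` (case `φ = π/2`) is `ck - 3c²/4`. -/
theorem sectional_curvature_of_top_frame {A V : Type} [CommRing A]
    [Algebra ℝ A] [AddCommGroup V] [Module A V] (F : GeomFrame A V)
    (X₁ X₂ X₃ : V) (hON : F.IsONFrame X₁ X₂ X₃) (c k : ℝ)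
    (h12 : F.bracket X₁ X₂ = algebraMap ℝ A c • X₃)
    (h23 : F.bracket X₂ X₃ = algebraMap ℝ A k • X₁)
    (h31 : F.bracket X₃ X₁ = algebraMap ℝ A k • X₂)
    (θ φ : ℝ) (X Y : V)
    (hX : X = algebraMap ℝ A (Real.cos θ) • X₁ + algebraMap ℝ A (Real.sin θ) • X₂)
    (hY : Y = algebraMap ℝ A (-(Real.sin φ * Real.sin θ)) • X₁ +
        algebraMap ℝ A (Real.sin φ * Real.cos θ) • X₂ +
        algebraMap ℝ A (Real.cos φ) • X₃) :
    F.g (F.curv X Y Y) X =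
      algebraMap ℝ A (Real.cos φ ^ 2 * (c ^ 2 / 4) +
        Real.sin φ ^ 2 * (c * k - 3 * c ^ 2 / 4)) := by
  have a0 : ∀ u : V, F.act u (0 : A) = 0 := GF.actC F
  have a1 : ∀ u : V, F.act u (1 : A) = 0 := GF.actC1 F
  have gg11 : F.g X₁ X₁ = 1 := hON.g11
  have gg12 : F.g X₁ X₂ = 0 := hON.g12
  have gg13 : F.g X₁ X₃ = 0 := hON.g13
  have gg21 : F.g X₂ X₁ = 0 := by rw [F.g_symm]; exact hON.g12
  have gg22 : F.g X₂ X₂ = 1 := hON.g22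
  have gg23 : F.g X₂ X₃ = 0 := hON.g23
  have gg31 : F.g X₃ X₁ = 0 := by rw [F.g_symm]; exact hON.g13
  have gg32 : F.g X₃ X₂ = 0 := by rw [F.g_symm]; exact hON.g23
  have gg33 : F.g X₃ X₃ = 1 := hON.g33
  have bb11 : F.bracket X₁ X₁ = (0:V) := GF.bracket_self F _
  have bb12 := h12
  have bb13 : F.bracket X₁ X₃ = algebraMap ℝ A ((-k)) • X₂ := by
    rw [F.bracket_antisymm, h31, ← neg_smul, ← map_neg]
  have bb21 : F.bracket X₂ X₁ = algebraMap ℝ A ((-c)) • X₃ := by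
    rw [F.bracket_antisymm, h12, ← neg_smul, ← map_neg]
  have bb22 : F.bracket X₂ X₂ = (0:V) := GF.bracket_self F _
  have bb23 := h23
  have bb31 := h31
  have bb32 : F.bracket X₃ X₂ = algebraMap ℝ A ((-k)) • X₁ := by
    rw [F.bracket_antisymm, h23, ← neg_smul, ← map_neg]
  have bb33 : F.bracket X₃ X₃ = (0:V) := GF.bracket_self F _
  have S111 : F.g (F.nabla X₁ X₁) X₁ = algebraMap ℝ A (0) := by
    rw [GF.koszulS F X₁ X₁ X₁ (by rw [gg11]; exact a1 _) (by rw [gg11]; exact a1 _) (by rw [gg11]; exact a1 _)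
      (0) (0) (0)
      (by rw [bb11, GF.g_zero_left]; simp) (by rw [bb11, GF.g_zero_left]; simp) (by rw [bb11, GF.g_zero_left]; simp)]
    congr 1 <;> ring
  have S112 : F.g (F.nabla X₁ X₁) X₂ = algebraMap ℝ A (0) := by
    rw [GF.koszulS F X₁ X₁ X₂ (by rw [gg12]; exact a0 _) (by rw [gg12]; exact a0 _) (by rw [gg11]; exact a1 _)
      (0) (0) (0)
      (by rw [bb11, GF.g_zero_left]; simp) (by rw [bb12, F.g_smul_left, gg31]; simp) (by rw [bb21, F.g_smul_left, gg31]; simp)]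
    congr 1 <;> ring
  have S113 : F.g (F.nabla X₁ X₁) X₃ = algebraMap ℝ A (0) := by
    rw [GF.koszulS F X₁ X₁ X₃ (by rw [gg13]; exact a0 _) (by rw [gg13]; exact a0 _) (by rw [gg11]; exact a1 _)
      (0) (0) (0)
      (by rw [bb11, GF.g_zero_left]; simp) (by rw [bb13, F.g_smul_left, gg21]; simp) (by rw [bb31, F.g_smul_left, gg21]; simp)]
    congr 1 <;> ring
  have n11 : F.nabla X₁ X₁ = (0:V) := by
    conv_lhs => rw [hON.span (F.nabla X₁ X₁)]
    rw [S111, S112, S113]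
    simp
  have S121 : F.g (F.nabla X₁ X₂) X₁ = algebraMap ℝ A (0) := by
    rw [GF.koszulS F X₁ X₂ X₁ (by rw [gg21]; exact a0 _) (by rw [gg11]; exact a1 _) (by rw [gg12]; exact a0 _)
      (0) (0) (0)
      (by rw [bb12, F.g_smul_left, gg31]; simp) (by rw [bb21, F.g_smul_left, gg31]; simp) (by rw [bb11, GF.g_zero_left]; simp)]
    congr 1 <;> ring
  have S122 : F.g (F.nabla X₁ X₂) X₂ = algebraMap ℝ A (0) := by
    rw [GF.koszulS F X₁ X₂ X₂ (by rw [gg22]; exact a1 _) (by rw [gg12]; exact a0 _) (by rw [gg12]; exact a0 _)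
      (0) (0) (0)
      (by rw [bb12, F.g_smul_left, gg32]; simp) (by rw [bb22, GF.g_zero_left]; simp) (by rw [bb21, F.g_smul_left, gg32]; simp)]
    congr 1 <;> ring
  have S123 : F.g (F.nabla X₁ X₂) X₃ = algebraMap ℝ A ((c * (1/2))) := by
    rw [GF.koszulS F X₁ X₂ X₃ (by rw [gg23]; exact a0 _) (by rw [gg13]; exact a0 _) (by rw [gg12]; exact a0 _)
      (c) (k) (k)
      (by rw [bb12, F.g_smul_left, gg33]; simp) (by rw [bb23, F.g_smul_left, gg11]; simp) (by rw [bb31, F.g_smul_left, gg22]; simp)]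
    congr 1 <;> ring
  have n12 : F.nabla X₁ X₂ = algebraMap ℝ A ((c * (1/2))) • X₃ := by
    conv_lhs => rw [hON.span (F.nabla X₁ X₂)]
    rw [S121, S122, S123]
    simp
  have S131 : F.g (F.nabla X₁ X₃) X₁ = algebraMap ℝ A (0) := by
    rw [GF.koszulS F X₁ X₃ X₁ (by rw [gg31]; exact a0 _) (by rw [gg11]; exact a1 _) (by rw [gg13]; exact a0 _)
      (0) (0) (0)
      (by rw [bb13, F.g_smul_left, gg21]; simp) (by rw [bb31, F.g_smul_left, gg21]; simp) (by rw [bb11, GF.g_zero_left]; simp)]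
    congr 1 <;> ring
  have S132 : F.g (F.nabla X₁ X₃) X₂ = algebraMap ℝ A ((-(1/2) * c)) := by
    rw [GF.koszulS F X₁ X₃ X₂ (by rw [gg32]; exact a0 _) (by rw [gg12]; exact a0 _) (by rw [gg13]; exact a0 _)
      ((-k)) ((-k)) ((-c))
      (by rw [bb13, F.g_smul_left, gg22]; simp) (by rw [bb32, F.g_smul_left, gg11]; simp) (by rw [bb21, F.g_smul_left, gg33]; simp)]
    congr 1 <;> ring
  have S133 : F.g (F.nabla X₁ X₃) X₃ = algebraMap ℝ A (0) := by
    rw [GF.koszulS F X₁ X₃ X₃ (by rw [gg33]; exact a1 _) (by rw [gg13]; exact a0 _) (by rw [gg13]; exact a0 _)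
      (0) (0) (0)
      (by rw [bb13, F.g_smul_left, gg23]; simp) (by rw [bb33, GF.g_zero_left]; simp) (by rw [bb31, F.g_smul_left, gg23]; simp)]
    congr 1 <;> ring
  have n13 : F.nabla X₁ X₃ = algebraMap ℝ A ((-(1/2) * c)) • X₂ := by
    conv_lhs => rw [hON.span (F.nabla X₁ X₃)]
    rw [S131, S132, S133]
    simp
  have S211 : F.g (F.nabla X₂ X₁) X₁ = algebraMap ℝ A (0) := by
    rw [GF.koszulS F X₂ X₁ X₁ (by rw [gg11]; exact a1 _) (by rw [gg21]; exact a0 _) (by rw [gg21]; exact a0 _)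
      (0) (0) (0)
      (by rw [bb21, F.g_smul_left, gg31]; simp) (by rw [bb11, GF.g_zero_left]; simp) (by rw [bb12, F.g_smul_left, gg31]; simp)]
    congr 1 <;> ring
  have S212 : F.g (F.nabla X₂ X₁) X₂ = algebraMap ℝ A (0) := by
    rw [GF.koszulS F X₂ X₁ X₂ (by rw [gg12]; exact a0 _) (by rw [gg22]; exact a1 _) (by rw [gg21]; exact a0 _)
      (0) (0) (0)
      (by rw [bb21, F.g_smul_left, gg32]; simp) (by rw [bb12, F.g_smul_left, gg32]; simp) (by rw [bb22, GF.g_zero_left]; simp)]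
    congr 1 <;> ring
  have S213 : F.g (F.nabla X₂ X₁) X₃ = algebraMap ℝ A ((-(1/2) * c)) := by
    rw [GF.koszulS F X₂ X₁ X₃ (by rw [gg13]; exact a0 _) (by rw [gg23]; exact a0 _) (by rw [gg21]; exact a0 _)
      ((-c)) ((-k)) ((-k))
      (by rw [bb21, F.g_smul_left, gg33]; simp) (by rw [bb13, F.g_smul_left, gg22]; simp) (by rw [bb32, F.g_smul_left, gg11]; simp)]
    congr 1 <;> ring
  have n21 : F.nabla X₂ X₁ = algebraMap ℝ A ((-(1/2) * c)) • X₃ := by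
    conv_lhs => rw [hON.span (F.nabla X₂ X₁)]
    rw [S211, S212, S213]
    simp
  have S221 : F.g (F.nabla X₂ X₂) X₁ = algebraMap ℝ A (0) := by
    rw [GF.koszulS F X₂ X₂ X₁ (by rw [gg21]; exact a0 _) (by rw [gg21]; exact a0 _) (by rw [gg22]; exact a1 _)
      (0) (0) (0)
      (by rw [bb22, GF.g_zero_left]; simp) (by rw [bb21, F.g_smul_left, gg32]; simp) (by rw [bb12, F.g_smul_left, gg32]; simp)]
    congr 1 <;> ring
  have S222 : F.g (F.nabla X₂ X₂) X₂ = algebraMap ℝ A (0) := by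
    rw [GF.koszulS F X₂ X₂ X₂ (by rw [gg22]; exact a1 _) (by rw [gg22]; exact a1 _) (by rw [gg22]; exact a1 _)
      (0) (0) (0)
      (by rw [bb22, GF.g_zero_left]; simp) (by rw [bb22, GF.g_zero_left]; simp) (by rw [bb22, GF.g_zero_left]; simp)]
    congr 1 <;> ring
  have S223 : F.g (F.nabla X₂ X₂) X₃ = algebraMap ℝ A (0) := by
    rw [GF.koszulS F X₂ X₂ X₃ (by rw [gg23]; exact a0 _) (by rw [gg23]; exact a0 _) (by rw [gg22]; exact a1 _)
      (0) (0) (0)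
      (by rw [bb22, GF.g_zero_left]; simp) (by rw [bb23, F.g_smul_left, gg12]; simp) (by rw [bb32, F.g_smul_left, gg12]; simp)]
    congr 1 <;> ring
  have n22 : F.nabla X₂ X₂ = (0:V) := by
    conv_lhs => rw [hON.span (F.nabla X₂ X₂)]
    rw [S221, S222, S223]
    simp
  have S231 : F.g (F.nabla X₂ X₃) X₁ = algebraMap ℝ A ((c * (1/2))) := by
    rw [GF.koszulS F X₂ X₃ X₁ (by rw [gg31]; exact a0 _) (by rw [gg21]; exact a0 _) (by rw [gg23]; exact a0 _)
      (k) (k) (c)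
      (by rw [bb23, F.g_smul_left, gg11]; simp) (by rw [bb31, F.g_smul_left, gg22]; simp) (by rw [bb12, F.g_smul_left, gg33]; simp)]
    congr 1 <;> ring
  have S232 : F.g (F.nabla X₂ X₃) X₂ = algebraMap ℝ A (0) := by
    rw [GF.koszulS F X₂ X₃ X₂ (by rw [gg32]; exact a0 _) (by rw [gg22]; exact a1 _) (by rw [gg23]; exact a0 _)
      (0) (0) (0)
      (by rw [bb23, F.g_smul_left, gg12]; simp) (by rw [bb32, F.g_smul_left, gg12]; simp) (by rw [bb22, GF.g_zero_left]; simp)]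
    congr 1 <;> ring
  have S233 : F.g (F.nabla X₂ X₃) X₃ = algebraMap ℝ A (0) := by
    rw [GF.koszulS F X₂ X₃ X₃ (by rw [gg33]; exact a1 _) (by rw [gg23]; exact a0 _) (by rw [gg23]; exact a0 _)
      (0) (0) (0)
      (by rw [bb23, F.g_smul_left, gg13]; simp) (by rw [bb33, GF.g_zero_left]; simp) (by rw [bb32, F.g_smul_left, gg13]; simp)]
    congr 1 <;> ring
  have n23 : F.nabla X₂ X₃ = algebraMap ℝ A ((c * (1/2))) • X₁ := by
    conv_lhs => rw [hON.span (F.nabla X₂ X₃)]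
    rw [S231, S232, S233]
    simp
  have S311 : F.g (F.nabla X₃ X₁) X₁ = algebraMap ℝ A (0) := by
    rw [GF.koszulS F X₃ X₁ X₁ (by rw [gg11]; exact a1 _) (by rw [gg31]; exact a0 _) (by rw [gg31]; exact a0 _)
      (0) (0) (0)
      (by rw [bb31, F.g_smul_left, gg21]; simp) (by rw [bb11, GF.g_zero_left]; simp) (by rw [bb13, F.g_smul_left, gg21]; simp)]
    congr 1 <;> ring
  have S312 : F.g (F.nabla X₃ X₁) X₂ = algebraMap ℝ A ((-(1/2) * c + k)) := by
    rw [GF.koszulS F X₃ X₁ X₂ (by rw [gg12]; exact a0 _) (by rw [gg32]; exact a0 _) (by rw [gg31]; exact a0 _)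
      (k) (c) (k)
      (by rw [bb31, F.g_smul_left, gg22]; simp) (by rw [bb12, F.g_smul_left, gg33]; simp) (by rw [bb23, F.g_smul_left, gg11]; simp)]
    congr 1 <;> ring
  have S313 : F.g (F.nabla X₃ X₁) X₃ = algebraMap ℝ A (0) := by
    rw [GF.koszulS F X₃ X₁ X₃ (by rw [gg13]; exact a0 _) (by rw [gg33]; exact a1 _) (by rw [gg31]; exact a0 _)
      (0) (0) (0)
      (by rw [bb31, F.g_smul_left, gg23]; simp) (by rw [bb13, F.g_smul_left, gg23]; simp) (by rw [bb33, GF.g_zero_left]; simp)]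
    congr 1 <;> ring
  have n31 : F.nabla X₃ X₁ = algebraMap ℝ A ((-(1/2) * c + k)) • X₂ := by
    conv_lhs => rw [hON.span (F.nabla X₃ X₁)]
    rw [S311, S312, S313]
    simp
  have S321 : F.g (F.nabla X₃ X₂) X₁ = algebraMap ℝ A ((c * (1/2) - k)) := by
    rw [GF.koszulS F X₃ X₂ X₁ (by rw [gg21]; exact a0 _) (by rw [gg31]; exact a0 _) (by rw [gg32]; exact a0 _)
      ((-k)) ((-c)) ((-k))
      (by rw [bb32, F.g_smul_left, gg11]; simp) (by rw [bb21, F.g_smul_left, gg33]; simp) (by rw [bb13, F.g_smul_left, gg22]; simp)]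
    congr 1 <;> ring
  have S322 : F.g (F.nabla X₃ X₂) X₂ = algebraMap ℝ A (0) := by
    rw [GF.koszulS F X₃ X₂ X₂ (by rw [gg22]; exact a1 _) (by rw [gg32]; exact a0 _) (by rw [gg32]; exact a0 _)
      (0) (0) (0)
      (by rw [bb32, F.g_smul_left, gg12]; simp) (by rw [bb22, GF.g_zero_left]; simp) (by rw [bb23, F.g_smul_left, gg12]; simp)]
    congr 1 <;> ring
  have S323 : F.g (F.nabla X₃ X₂) X₃ = algebraMap ℝ A (0) := by
    rw [GF.koszulS F X₃ X₂ X₃ (by rw [gg23]; exact a0 _) (by rw [gg33]; exact a1 _) (by rw [gg32]; exact a0 _)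
      (0) (0) (0)
      (by rw [bb32, F.g_smul_left, gg13]; simp) (by rw [bb23, F.g_smul_left, gg13]; simp) (by rw [bb33, GF.g_zero_left]; simp)]
    congr 1 <;> ring
  have n32 : F.nabla X₃ X₂ = algebraMap ℝ A ((c * (1/2) - k)) • X₁ := by
    conv_lhs => rw [hON.span (F.nabla X₃ X₂)]
    rw [S321, S322, S323]
    simp
  have S331 : F.g (F.nabla X₃ X₃) X₁ = algebraMap ℝ A (0) := by
    rw [GF.koszulS F X₃ X₃ X₁ (by rw [gg31]; exact a0 _) (by rw [gg31]; exact a0 _) (by rw [gg33]; exact a1 _)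
      (0) (0) (0)
      (by rw [bb33, GF.g_zero_left]; simp) (by rw [bb31, F.g_smul_left, gg23]; simp) (by rw [bb13, F.g_smul_left, gg23]; simp)]
    congr 1 <;> ring
  have S332 : F.g (F.nabla X₃ X₃) X₂ = algebraMap ℝ A (0) := by
    rw [GF.koszulS F X₃ X₃ X₂ (by rw [gg32]; exact a0 _) (by rw [gg32]; exact a0 _) (by rw [gg33]; exact a1 _)
      (0) (0) (0)
      (by rw [bb33, GF.g_zero_left]; simp) (by rw [bb32, F.g_smul_left, gg13]; simp) (by rw [bb23, F.g_smul_left, gg13]; simp)]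
    congr 1 <;> ring
  have S333 : F.g (F.nabla X₃ X₃) X₃ = algebraMap ℝ A (0) := by
    rw [GF.koszulS F X₃ X₃ X₃ (by rw [gg33]; exact a1 _) (by rw [gg33]; exact a1 _) (by rw [gg33]; exact a1 _)
      (0) (0) (0)
      (by rw [bb33, GF.g_zero_left]; simp) (by rw [bb33, GF.g_zero_left]; simp) (by rw [bb33, GF.g_zero_left]; simp)]
    congr 1 <;> ring
  have n33 : F.nabla X₃ X₃ = (0:V) := by
    conv_lhs => rw [hON.span (F.nabla X₃ X₃)]
    rw [S331, S332, S333]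
    simp
  rw [hX, hY]
  simp only [GeomFrame.curv, F.nabla_add_left, F.nabla_add_right, F.nabla_smul_left,
    GF.nablaC_right, F.bracket_add_left, GF.bracket_add_right, GF.bracketC_left,
    GF.bracketC_right, bb11, bb12, bb13, bb21, bb22, bb23, bb31, bb32, bb33,
    GF.nabla_zero_left, n11, n12, n13, n21, n22, n23, n31, n32, n33, smul_smul,
    ← map_mul, smul_zero, zero_smul, map_zero, add_zero, zero_add,
    GF.g_sub_left, F.g_add_left, F.g_smul_left, GF.g_add_right, GF.g_smul_right,
    gg11, gg12, gg13, gg21, gg22, gg23, gg31, gg32, gg33,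
    mul_one, mul_zero, zero_mul, sub_zero, zero_sub]
  simp only [← map_add, ← map_sub, ← map_neg, ← map_mul]
  congr 1
  linear_combination (Real.sin φ*Real.sin φ*c*k - (3/4)*Real.sin φ*Real.sin φ*c*c + (1/4)*Real.cos φ*Real.cos φ*c*c + Real.sin θ*Real.sin θ*Real.sin φ*Real.sin φ*c*k - (3/4)*Real.sin θ*Real.sin θ*Real.sin φ*Real.sin φ*c*c + Real.cos θ*Real.cos θ*Real.sin φ*Real.sin φ*c*k - (3/4)*Real.cos θ*Real.cos θ*Real.sin φ*Real.sin φ*c*c) * Real.sin_sq_add_cos_sq θ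
end

section
/- On the Heisenberg group, realized as ℝ³ with multiplication (x,y,z)·(x',y',z') = (x+x', y+y', z+z'+xy'), equip ℝ³ with the Riemannian metric making the frame X₁ = ∂/∂x, X₂ = ∂/∂z + x ∂/∂y, X₃ = ∂/∂y orthonormal. Then the Lie brackets satisfy [X₁, X₂] = X₃, [X₂, X₃] = 0, [X₃, X₁] = 0, the field X₃ is geodesic and Killing, and for every unit-speed geodesic γ with γ̇ = a₁X₁ + a₂X₂ + a₃X₃ the rotation speed of X₁ about X₃ along γ equals -a₃/2 and the rotation speed of X₃ about γ̇ equals (a₁² + a₂²)/2. -/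
/-- Points of the Heisenberg group, realized as `ℝ³` (coordinates `x = p 0`,
`y = p 1`, `z = p 2`). -/
abbrev HPt := Fin 3 → ℝ

/-- The Heisenberg group law `(x,y,z)·(x',y',z') = (x+x', y+y', z+z'+xy')`. -/
def hMul (p q : HPt) : HPt := ![p 0 + q 0, p 1 + q 1, p 2 + q 2 + p 0 * q 1]

/-- The Lie bracket of two vector fields on `ℝ³`. -/
noncomputable def vbr (v w : HPt → HPt) (p : HPt) : HPt :=
  fderiv ℝ w p (v p) - fderiv ℝ v p (w p)

/-- The frame `X₁ = ∂/∂x`, `X₂ = ∂/∂z + x ∂/∂y`, `X₃ = ∂/∂y`. -/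
def hX₁ : HPt → HPt := fun _ => ![1, 0, 0]
def hX₂ : HPt → HPt := fun p => ![0, p 0, 1]
def hX₃ : HPt → HPt := fun _ => ![0, 1, 0]


namespace GeomFrame

variable {A V : Type} [CommRing A] [Algebra ℝ A] [AddCommGroup V] [Module A V]
  (F : GeomFrame A V)

lemma g_smul_right (f : A) (v w : V) : F.g v (f • w) = f * F.g v w := by
  rw [F.g_symm, F.g_smul_left, F.g_symm]

lemma g_add_right (u v w : V) : F.g u (v + w) = F.g u v + F.g u w := by
  rw [F.g_symm, F.g_add_left, F.g_symm v u, F.g_symm w u]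

lemma g_neg_left (v w : V) : F.g (-v) w = - F.g v w := by
  rw [← neg_one_smul A v, F.g_smul_left]; ring

lemma g_neg_right (v w : V) : F.g v (-w) = - F.g v w := by
  rw [F.g_symm, F.g_neg_left, F.g_symm]

lemma g_sub_left (u v w : V) : F.g (u - v) w = F.g u w - F.g v w := by
  rw [sub_eq_add_neg, F.g_add_left, F.g_neg_left, sub_eq_add_neg]

lemma g_zero_left (w : V) : F.g 0 w = 0 := by
  have h := F.g_smul_left 0 0 w
  simpa using h

lemma g_zero_right (w : V) : F.g w 0 = 0 := by
  rw [F.g_symm, F.g_zero_left]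

lemma act_zero (X : V) : F.act X 0 = 0 := by
  have h := F.act_const X 0; simpa using h

lemma act_one (X : V) : F.act X 1 = 0 := by
  have h := F.act_const X 1; simpa using h

/-- The Koszul formula for frame fields with constant inner products. -/
lemma koszul (X Y Z : V)
    (h1 : F.act X (F.g Y Z) = 0) (h2 : F.act Y (F.g X Z) = 0)
    (h3 : F.act Z (F.g X Y) = 0) :
    F.g (F.nabla X Y) Z + F.g (F.nabla X Y) Z =
      F.g (F.bracket X Y) Z - F.g Y (F.bracket X Z) - F.g X (F.bracket Y Z) := by
  have t1 : F.nabla Y X = F.nabla X Y - F.bracket X Y := by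
    rw [← F.nabla_torsion_free X Y]; abel
  have t2 : F.nabla X Z = F.nabla Z X + F.bracket X Z := by
    rw [← F.nabla_torsion_free X Z]; abel
  have t3 : F.nabla Y Z = F.nabla Z Y + F.bracket Y Z := by
    rw [← F.nabla_torsion_free Y Z]; abel
  have e1 := F.nabla_metric X Y Z
  have e2 := F.nabla_metric Y X Z
  have e3 := F.nabla_metric Z X Y
  rw [h1, t2, F.g_add_right, F.g_symm Y (F.nabla Z X)] at e1
  rw [h2, t1, t3, F.g_sub_left, F.g_add_right] at e2
  rw [h3] at e3
  linear_combination -e1 - e2 + e3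

end GeomFrame

/-- Halving in an `ℝ`-algebra. -/
lemma halfA {A : Type} [CommRing A] [Algebra ℝ A] {x c : A}
    (h : x + x = c) : x = algebraMap ℝ A (1 / 2) * c := by
  have h2 : algebraMap ℝ A (1 / 2) * (x + x) = x := by
    rw [mul_add, ← add_mul, ← map_add]
    norm_num
  rw [h] at h2
  exact h2.symm

/-- Halving for vectors in a module over an `ℝ`-algebra. -/
lemma vhalf {A V : Type} [CommRing A] [Algebra ℝ A] [AddCommGroup V] [Module A V]
    {v : V} (h : v + v = 0) : v = 0 := by
  have h2 : (algebraMap ℝ A (1 / 2)) • (v + v) = v := by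
    rw [smul_add, ← add_smul, ← map_add]
    norm_num
  rw [h, smul_zero] at h2
  exact h2.symm

/-- The derivative of `hX₂`. -/
noncomputable def hL₂ : HPt →L[ℝ] HPt :=
  ContinuousLinearMap.pi ![0, ContinuousLinearMap.proj 0, 0]

lemma hX₂_hasFDerivAt (p : HPt) : HasFDerivAt hX₂ hL₂ p := by
  apply hasFDerivAt_pi''
  intro i
  fin_cases i
  · simp only [hX₂, hL₂, ContinuousLinearMap.proj_pi, Matrix.cons_val_zero]
    exact hasFDerivAt_const 0 p
  · simp only [hX₂, hL₂, ContinuousLinearMap.proj_pi, Matrix.cons_val_one, Matrix.head_cons]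
    exact hasFDerivAt_apply 0 p
  · simp only [hX₂, hL₂, ContinuousLinearMap.proj_pi]
    norm_num
    exact hasFDerivAt_const 1 p

/-- on the Heisenberg group the frame satisfies `[X₁,X₂] = X₃`,
`[X₂,X₃] = 0`, `[X₃,X₁] = 0`; for the metric making it orthonormal (modelled by
an abstract `GeomFrame` whose frame has these bracket relations), `X₃` is geodesic
and Killing, and along every unit-speed geodesic `γ̇ = a₁X₁ + a₂X₂ + a₃X₃` the
rotation speed of `X₁` about `X₃` is `-a₃/2`, and that of `X₃` about `γ̇` is
`(a₁² + a₂²)/2`. -/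
theorem heisenberg_top {A V : Type} [CommRing A]
    [Algebra ℝ A] [AddCommGroup V] [Module A V] (F : GeomFrame A V)
    (Y₁ Y₂ Y₃ : V) (hON : F.IsONFrame Y₁ Y₂ Y₃)
    (hb12 : F.bracket Y₁ Y₂ = Y₃)
    (hb23 : F.bracket Y₂ Y₃ = 0)
    (hb31 : F.bracket Y₃ Y₁ = 0)
    (T : V) (a₁ a₂ a₃ : A)
    (hT : T = a₁ • Y₁ + a₂ • Y₂ + a₃ • Y₃)
    (hgeo : F.nabla T T = 0) (hunit : F.g T T = 1) :
    (∀ p : HPt, vbr hX₁ hX₂ p = hX₃ p ∧ vbr hX₂ hX₃ p = 0 ∧ vbr hX₃ hX₁ p = 0) ∧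
    F.nabla Y₃ Y₃ = 0 ∧
    (∀ v w : V, F.g (F.nabla v Y₃) w + F.g v (F.nabla w Y₃) = 0) ∧
    F.g (F.nabla T Y₁) (F.cross Y₃ Y₁) = algebraMap ℝ A (-(1 / 2)) * a₃ ∧
    F.g (F.nabla T Y₃) (F.cross T Y₃) =
      algebraMap ℝ A (1 / 2) * (a₁ * a₁ + a₂ * a₂) := by
  classical
  set hf : A := algebraMap ℝ A (1 / 2) with hf_def
  -- metric values
  have g21 : F.g Y₂ Y₁ = 0 := by rw [F.g_symm]; exact hON.g12
  have g31 : F.g Y₃ Y₁ = 0 := by rw [F.g_symm]; exact hON.g13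
  have g32 : F.g Y₃ Y₂ = 0 := by rw [F.g_symm]; exact hON.g23
  -- brackets
  have hb21 : F.bracket Y₂ Y₁ = -Y₃ := by rw [F.bracket_antisymm, hb12]
  have hb13 : F.bracket Y₁ Y₃ = 0 := by rw [F.bracket_antisymm, hb31, neg_zero]
  have hb32 : F.bracket Y₃ Y₂ = 0 := by rw [F.bracket_antisymm, hb23, neg_zero]
  have hb11 : F.bracket Y₁ Y₁ = 0 := by
    refine vhalf (A := A) ?_
    nth_rewrite 1 [F.bracket_antisymm Y₁ Y₁]
    abel
  have hb22 : F.bracket Y₂ Y₂ = 0 := by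
    refine vhalf (A := A) ?_
    nth_rewrite 1 [F.bracket_antisymm Y₂ Y₂]
    abel
  have hb33 : F.bracket Y₃ Y₃ = 0 := by
    refine vhalf (A := A) ?_
    nth_rewrite 1 [F.bracket_antisymm Y₃ Y₃]
    abel
  -- act kills constant metric coefficients
  have hact : ∀ X P Q : V, F.g P Q = 0 ∨ F.g P Q = 1 → F.act X (F.g P Q) = 0 := by
    rintro X P Q (h | h) <;> rw [h]
    · exact F.act_zero X
    · exact F.act_one X
  have ha11 : ∀ X : V, F.act X (F.g Y₁ Y₁) = 0 := fun X => hact X _ _ (Or.inr hON.g11)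
  have ha22 : ∀ X : V, F.act X (F.g Y₂ Y₂) = 0 := fun X => hact X _ _ (Or.inr hON.g22)
  have ha33 : ∀ X : V, F.act X (F.g Y₃ Y₃) = 0 := fun X => hact X _ _ (Or.inr hON.g33)
  have ha12 : ∀ X : V, F.act X (F.g Y₁ Y₂) = 0 := fun X => hact X _ _ (Or.inl hON.g12)
  have ha13 : ∀ X : V, F.act X (F.g Y₁ Y₃) = 0 := fun X => hact X _ _ (Or.inl hON.g13)
  have ha23 : ∀ X : V, F.act X (F.g Y₂ Y₃) = 0 := fun X => hact X _ _ (Or.inl hON.g23)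
  have ha21 : ∀ X : V, F.act X (F.g Y₂ Y₁) = 0 := fun X => hact X _ _ (Or.inl g21)
  have ha31 : ∀ X : V, F.act X (F.g Y₃ Y₁) = 0 := fun X => hact X _ _ (Or.inl g31)
  have ha32 : ∀ X : V, F.act X (F.g Y₃ Y₂) = 0 := fun X => hact X _ _ (Or.inl g32)
  -- component extraction
  have comp : ∀ (W : V) (r1 r2 r3 : A), F.g W Y₁ = r1 → F.g W Y₂ = r2 → F.g W Y₃ = r3 →
      W = r1 • Y₁ + r2 • Y₂ + r3 • Y₃ := by
    intro W r1 r2 r3 e1 e2 e3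
    rw [← e1, ← e2, ← e3]
    exact hON.span W
  -- ∇_{Y₁} Y₁ = 0
  have n11 : F.nabla Y₁ Y₁ = 0 := by
    have e1 := F.koszul Y₁ Y₁ Y₁ (ha11 _) (ha11 _) (ha11 _)
    have e2 := F.koszul Y₁ Y₁ Y₂ (ha12 _) (ha12 _) (ha11 _)
    have e3 := F.koszul Y₁ Y₁ Y₃ (ha13 _) (ha13 _) (ha11 _)
    simp only [hb11, hb12, hb13, hb21, hb22, hb23, hb31, hb32, hb33, F.g_neg_left,
      F.g_neg_right, F.g_zero_left, F.g_zero_right, hON.g11, hON.g22, hON.g33, hON.g12,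
      hON.g13, hON.g23, g21, g31, g32] at e1 e2 e3
    have := comp (F.nabla Y₁ Y₁) 0 0 0
      (by rw [halfA (by linear_combination e1 : F.g (F.nabla Y₁ Y₁) Y₁ + F.g (F.nabla Y₁ Y₁) Y₁ = 0)]; ring) (by rw [halfA (by linear_combination e2 : F.g (F.nabla Y₁ Y₁) Y₂ + F.g (F.nabla Y₁ Y₁) Y₂ = 0)]; ring)
      (by rw [halfA (by linear_combination e3 : F.g (F.nabla Y₁ Y₁) Y₃ + F.g (F.nabla Y₁ Y₁) Y₃ = 0)]; ring)
    rw [this]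
    module
  -- ∇_{Y₂} Y₁ = -(1/2) Y₃
  have n21 : F.nabla Y₂ Y₁ = -(hf • Y₃) := by
    have e1 := F.koszul Y₂ Y₁ Y₁ (ha11 _) (ha21 _) (ha21 _)
    have e2 := F.koszul Y₂ Y₁ Y₂ (ha12 _) (ha22 _) (ha21 _)
    have e3 := F.koszul Y₂ Y₁ Y₃ (ha13 _) (ha23 _) (ha21 _)
    simp only [hb11, hb12, hb13, hb21, hb22, hb23, hb31, hb32, hb33, F.g_neg_left,
      F.g_neg_right, F.g_zero_left, F.g_zero_right, hON.g11, hON.g22, hON.g33, hON.g12,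
      hON.g13, hON.g23, g21, g31, g32] at e1 e2 e3
    have := comp (F.nabla Y₂ Y₁) 0 0 (-hf)
      (by rw [halfA (by linear_combination e1 : F.g (F.nabla Y₂ Y₁) Y₁ + F.g (F.nabla Y₂ Y₁) Y₁ = 0)]; ring)
      (by rw [halfA (by linear_combination e2 : F.g (F.nabla Y₂ Y₁) Y₂ + F.g (F.nabla Y₂ Y₁) Y₂ = 0)]; ring)
      (by rw [halfA (by linear_combination e3 : F.g (F.nabla Y₂ Y₁) Y₃ + F.g (F.nabla Y₂ Y₁) Y₃ = -1)]; ring)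
    rw [this]
    module
  -- ∇_{Y₃} Y₁ = -(1/2) Y₂
  have n31 : F.nabla Y₃ Y₁ = -(hf • Y₂) := by
    have e1 := F.koszul Y₃ Y₁ Y₁ (ha11 _) (ha31 _) (ha31 _)
    have e2 := F.koszul Y₃ Y₁ Y₂ (ha12 _) (ha32 _) (ha31 _)
    have e3 := F.koszul Y₃ Y₁ Y₃ (ha13 _) (ha33 _) (ha31 _)
    simp only [hb11, hb12, hb13, hb21, hb22, hb23, hb31, hb32, hb33, F.g_neg_left,
      F.g_neg_right, F.g_zero_left, F.g_zero_right, hON.g11, hON.g22, hON.g33, hON.g12,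
      hON.g13, hON.g23, g21, g31, g32] at e1 e2 e3
    have := comp (F.nabla Y₃ Y₁) 0 (-hf) 0
      (by rw [halfA (by linear_combination e1 : F.g (F.nabla Y₃ Y₁) Y₁ + F.g (F.nabla Y₃ Y₁) Y₁ = 0)]; ring)
      (by rw [halfA (by linear_combination e2 : F.g (F.nabla Y₃ Y₁) Y₂ + F.g (F.nabla Y₃ Y₁) Y₂ = -1)]; ring)
      (by rw [halfA (by linear_combination e3 : F.g (F.nabla Y₃ Y₁) Y₃ + F.g (F.nabla Y₃ Y₁) Y₃ = 0)]; ring)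
    rw [this]
    module
  -- ∇_{Y₁} Y₃ = -(1/2) Y₂
  have n13 : F.nabla Y₁ Y₃ = -(hf • Y₂) := by
    have e1 := F.koszul Y₁ Y₃ Y₁ (ha31 _) (ha11 _) (ha13 _)
    have e2 := F.koszul Y₁ Y₃ Y₂ (ha32 _) (ha12 _) (ha13 _)
    have e3 := F.koszul Y₁ Y₃ Y₃ (ha33 _) (ha13 _) (ha13 _)
    simp only [hb11, hb12, hb13, hb21, hb22, hb23, hb31, hb32, hb33, F.g_neg_left,
      F.g_neg_right, F.g_zero_left, F.g_zero_right, hON.g11, hON.g22, hON.g33, hON.g12,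
      hON.g13, hON.g23, g21, g31, g32] at e1 e2 e3
    have := comp (F.nabla Y₁ Y₃) 0 (-hf) 0
      (by rw [halfA (by linear_combination e1 : F.g (F.nabla Y₁ Y₃) Y₁ + F.g (F.nabla Y₁ Y₃) Y₁ = 0)]; ring)
      (by rw [halfA (by linear_combination e2 : F.g (F.nabla Y₁ Y₃) Y₂ + F.g (F.nabla Y₁ Y₃) Y₂ = -1)]; ring)
      (by rw [halfA (by linear_combination e3 : F.g (F.nabla Y₁ Y₃) Y₃ + F.g (F.nabla Y₁ Y₃) Y₃ = 0)]; ring)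
    rw [this]
    module
  -- ∇_{Y₂} Y₃ = (1/2) Y₁
  have n23 : F.nabla Y₂ Y₃ = hf • Y₁ := by
    have e1 := F.koszul Y₂ Y₃ Y₁ (ha31 _) (ha21 _) (ha23 _)
    have e2 := F.koszul Y₂ Y₃ Y₂ (ha32 _) (ha22 _) (ha23 _)
    have e3 := F.koszul Y₂ Y₃ Y₃ (ha33 _) (ha23 _) (ha23 _)
    simp only [hb11, hb12, hb13, hb21, hb22, hb23, hb31, hb32, hb33, F.g_neg_left,
      F.g_neg_right, F.g_zero_left, F.g_zero_right, hON.g11, hON.g22, hON.g33, hON.g12,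
      hON.g13, hON.g23, g21, g31, g32] at e1 e2 e3
    have := comp (F.nabla Y₂ Y₃) hf 0 0
      (by rw [halfA (by linear_combination e1 : F.g (F.nabla Y₂ Y₃) Y₁ + F.g (F.nabla Y₂ Y₃) Y₁ = 1)]; ring)
      (by rw [halfA (by linear_combination e2 : F.g (F.nabla Y₂ Y₃) Y₂ + F.g (F.nabla Y₂ Y₃) Y₂ = 0)]; ring)
      (by rw [halfA (by linear_combination e3 : F.g (F.nabla Y₂ Y₃) Y₃ + F.g (F.nabla Y₂ Y₃) Y₃ = 0)]; ring)
    rw [this]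
    module
  -- ∇_{Y₃} Y₃ = 0
  have n33 : F.nabla Y₃ Y₃ = 0 := by
    have e1 := F.koszul Y₃ Y₃ Y₁ (ha31 _) (ha31 _) (ha33 _)
    have e2 := F.koszul Y₃ Y₃ Y₂ (ha32 _) (ha32 _) (ha33 _)
    have e3 := F.koszul Y₃ Y₃ Y₃ (ha33 _) (ha33 _) (ha33 _)
    simp only [hb11, hb12, hb13, hb21, hb22, hb23, hb31, hb32, hb33, F.g_neg_left,
      F.g_neg_right, F.g_zero_left, F.g_zero_right, hON.g11, hON.g22, hON.g33, hON.g12,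
      hON.g13, hON.g23, g21, g31, g32] at e1 e2 e3
    have := comp (F.nabla Y₃ Y₃) 0 0 0
      (by rw [halfA (by linear_combination e1 : F.g (F.nabla Y₃ Y₃) Y₁ + F.g (F.nabla Y₃ Y₃) Y₁ = 0)]; ring)
      (by rw [halfA (by linear_combination e2 : F.g (F.nabla Y₃ Y₃) Y₂ + F.g (F.nabla Y₃ Y₃) Y₂ = 0)]; ring)
      (by rw [halfA (by linear_combination e3 : F.g (F.nabla Y₃ Y₃) Y₃ + F.g (F.nabla Y₃ Y₃) Y₃ = 0)]; ring)
    rw [this]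
    module
  -- covariant derivative of Y₃ along an arbitrary field
  have nY3 : ∀ v : V, F.nabla v Y₃ = (hf * F.g v Y₂) • Y₁ + (-(hf * F.g v Y₁)) • Y₂ := by
    intro v
    conv_lhs => rw [hON.span v]
    rw [F.nabla_add_left, F.nabla_add_left, F.nabla_smul_left, F.nabla_smul_left,
      F.nabla_smul_left, n13, n23, n33]
    module
  refine ⟨?_, n33, ?_, ?_, ?_⟩
  · -- the concrete bracket computations on ℝ³
    intro p
    have d1 : fderiv ℝ hX₁ p = 0 :=
      (hasFDerivAt_const (![1, 0, 0] : HPt) p).fderiv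
    have d3 : fderiv ℝ hX₃ p = 0 :=
      (hasFDerivAt_const (![0, 1, 0] : HPt) p).fderiv
    have d2 : fderiv ℝ hX₂ p = hL₂ := (hX₂_hasFDerivAt p).fderiv
    refine ⟨?_, ?_, ?_⟩
    · rw [vbr, d1, d2]
      simp only [ContinuousLinearMap.zero_apply, sub_zero]
      funext i
      fin_cases i <;> simp [hL₂, hX₁, hX₃]
    · rw [vbr, d3, d2]
      simp only [ContinuousLinearMap.zero_apply, zero_sub]
      funext i
      fin_cases i <;> simp [hL₂, hX₃]
    · rw [vbr, d1, d3]
      simp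
  · -- Killing
    intro v w
    rw [nY3 v, nY3 w, F.g_add_left, F.g_smul_left, F.g_smul_left, F.g_add_right,
      F.g_smul_right, F.g_smul_right, F.g_symm Y₁ w, F.g_symm Y₂ w]
    ring
  · -- rotation speed of Y₁ about Y₃
    have nT1 : F.nabla T Y₁ = (-(a₂ * hf)) • Y₃ + (-(a₃ * hf)) • Y₂ := by
      rw [hT, F.nabla_add_left, F.nabla_add_left, F.nabla_smul_left, F.nabla_smul_left,
        F.nabla_smul_left, n11, n21, n31]
      module
    rw [hON.cross31, nT1, F.g_add_left, F.g_smul_left, F.g_smul_left, g32, hON.g22,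
      map_neg]
    ring
  · -- rotation speed of Y₃ about T
    have nT3 : F.nabla T Y₃ = (a₂ * hf) • Y₁ + (-(a₁ * hf)) • Y₂ := by
      rw [hT, F.nabla_add_left, F.nabla_add_left, F.nabla_smul_left, F.nabla_smul_left,
        F.nabla_smul_left, n13, n23, n33]
      module
    have c13 : F.cross Y₁ Y₃ = -Y₂ := by rw [F.cross_antisymm, hON.cross31]
    have c33 : F.cross Y₃ Y₃ = 0 := by
      refine vhalf (A := A) ?_
      nth_rewrite 1 [F.cross_antisymm Y₃ Y₃]
      abel
    have cT3 : F.cross T Y₃ = a₂ • Y₁ + (-a₁) • Y₂ := by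
      rw [hT, F.cross_add_left, F.cross_add_left, F.cross_smul_left, F.cross_smul_left,
        F.cross_smul_left, c13, hON.cross23, c33]
      module
    rw [nT3, cT3, F.g_add_left, F.g_smul_left, F.g_smul_left, F.g_add_right,
      F.g_add_right, F.g_smul_right, F.g_smul_right, F.g_smul_right, F.g_smul_right,
      hON.g11, hON.g22, hON.g12, g21]
    ring
end

section
/- On S³, the unit sphere of the quaternions ℍ, let v be the Killing field v_q = a₁qi + a₂qj + a₃qk + b₁iq + b₂jq + b₃kq for real constants a_i, b_i, for the round metric. Then v is a geodesic vector field (∇_v v = 0 where v ≠ 0 means: all integral curves are geodesics, equivalently v has constant coefficients in the right- or left-invariant frame) if and only if a₁ = a₂ = a₃ = 0 or b₁ = b₂ = b₃ = 0. -/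
open scoped Quaternion
/-- The quaternion `i`. -/
def qI : ℍ[ℝ] := ⟨0, 1, 0, 0⟩
/-- The quaternion `j`. -/
def qJ : ℍ[ℝ] := ⟨0, 0, 1, 0⟩
/-- The quaternion `k`. -/
def qK : ℍ[ℝ] := ⟨0, 0, 0, 1⟩

lemma qI_mem : qI ∈ Metric.sphere (0 : ℍ[ℝ]) 1 := by
  rw [mem_sphere_zero_iff_norm, norm_eq_sqrt_real_inner, Quaternion.inner_self]
  rw [Quaternion.normSq_def']
  simp [qI]

lemma qJ_mem : qJ ∈ Metric.sphere (0 : ℍ[ℝ]) 1 := by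
  rw [mem_sphere_zero_iff_norm, norm_eq_sqrt_real_inner, Quaternion.inner_self]
  rw [Quaternion.normSq_def']
  simp [qJ]

lemma one_mem : (1:ℍ[ℝ]) ∈ Metric.sphere (0 : ℍ[ℝ]) 1 := by
  simp [mem_sphere_zero_iff_norm]

/-- the Killing field
`v_q = a₁qi + a₂qj + a₃qk + b₁iq + b₂jq + b₃kq` on `S³` is geodesic — i.e. it has
constant coefficients in the left-invariant frame `(qi, qj, qk)` or in the
right-invariant frame `(iq, jq, kq)` — if and only if `a = 0` or `b = 0`. -/
theorem sphere_killing_field_geodesic_iff (a b : Fin 3 → ℝ) (v : ℍ[ℝ] → ℍ[ℝ])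
    (hv : v = fun q => a 0 • (q * qI) + a 1 • (q * qJ) + a 2 • (q * qK) +
      b 0 • (qI * q) + b 1 • (qJ * q) + b 2 • (qK * q)) :
    ((∃ x y z : ℝ, ∀ q ∈ Metric.sphere (0 : ℍ[ℝ]) 1,
        v q = x • (q * qI) + y • (q * qJ) + z • (q * qK)) ∨
      (∃ x y z : ℝ, ∀ q ∈ Metric.sphere (0 : ℍ[ℝ]) 1,
        v q = x • (qI * q) + y • (qJ * q) + z • (qK * q))) ↔
      (a = 0 ∨ b = 0) := by
  subst hv
  constructor
  · rintro (⟨x, y, z, h⟩ | ⟨x, y, z, h⟩)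
    · right
      have h1 := h 1 one_mem
      have hi := h qI qI_mem
      have hj := h qJ qJ_mem
      simp only [Quaternion.ext_iff, Quaternion.re_mul, Quaternion.imI_mul,
        Quaternion.imJ_mul, Quaternion.imK_mul, Quaternion.re_add, Quaternion.imI_add,
        Quaternion.imJ_add, Quaternion.imK_add, Quaternion.re_smul, Quaternion.imI_smul,
        Quaternion.imJ_smul, Quaternion.imK_smul, Quaternion.re_one, Quaternion.imI_one,
        Quaternion.imJ_one, Quaternion.imK_one, smul_eq_mul] at h1 hi hj
      simp only [qI, qJ, qK] at h1 hi hj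
      funext i
      fin_cases i <;> simp <;> linarith [h1.1, h1.2.1, h1.2.2.1, h1.2.2.2, hi.1, hi.2.1,
        hi.2.2.1, hi.2.2.2, hj.1, hj.2.1, hj.2.2.1, hj.2.2.2]
    · left
      have h1 := h 1 one_mem
      have hi := h qI qI_mem
      have hj := h qJ qJ_mem
      simp only [Quaternion.ext_iff, Quaternion.re_mul, Quaternion.imI_mul,
        Quaternion.imJ_mul, Quaternion.imK_mul, Quaternion.re_add, Quaternion.imI_add,
        Quaternion.imJ_add, Quaternion.imK_add, Quaternion.re_smul, Quaternion.imI_smul,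
        Quaternion.imJ_smul, Quaternion.imK_smul, Quaternion.re_one, Quaternion.imI_one,
        Quaternion.imJ_one, Quaternion.imK_one, smul_eq_mul] at h1 hi hj
      simp only [qI, qJ, qK] at h1 hi hj
      funext i
      fin_cases i <;> simp <;> linarith [h1.1, h1.2.1, h1.2.2.1, h1.2.2.2, hi.1, hi.2.1,
        hi.2.2.1, hi.2.2.2, hj.1, hj.2.1, hj.2.2.1, hj.2.2.2]
  · rintro (ha | hb)
    · right
      refine ⟨b 0, b 1, b 2, fun q _ => ?_⟩
      simp [ha]
    · left
      refine ⟨a 0, a 1, a 2, fun q _ => ?_⟩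
      simp [hb]
end
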